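/- For any connected graph with n vertices, m edges, and m×n incidence matrix G over F₂, there exists an n×m matrix T that is (3,2)-sparse (every row has weight at most 3 and every column has weight at most 2) and an n×n permutation matrix P such that T·G·P = H_C, where H_C is the canonical cyclic parity check matrix of the length-n repetition code (H_C = I + C with C the cyclic shift matrix). -/

import Mathlib

open Matrix Finset

/-- Hamming weight of a vector over `F₂`. -/
def hwt {E : Type*} [Fintype E] (v : E → ZMod 2) : ℕ :=
  (Finset.univ.filter fun e => v e ≠ 0).card

/-- A matrix over `F₂` is `(r, c)`-sparse: every row has weight at most `r` and every
column has weight at most `c`. -/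
def Sparse {A B : Type*} [Fintype A] [Fintype B]
    (M : Matrix A B (ZMod 2)) (r c : ℕ) : Prop :=
  (∀ i, hwt (M i) ≤ r) ∧ (∀ j, hwt (fun i => M i j) ≤ c)

/-- `P` is a permutation matrix. -/
def IsPermMatrix {n : ℕ} (P : Matrix (Fin n) (Fin n) (ZMod 2)) : Prop :=
  ∃ σ : Equiv.Perm (Fin n), ∀ i j, P i j = if σ i = j then 1 else 0

/-- `G` is the incidence matrix of a graph: every row (edge) has exactly two `1`s. -/
def IsIncidence {m n : ℕ} (G : Matrix (Fin m) (Fin n) (ZMod 2)) : Prop :=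
  ∀ e, hwt (G e) = 2

/-- The graph on the `n` vertices determined by an incidence matrix:
`i` and `j` are adjacent iff some edge contains both. -/
def incGraph {m n : ℕ} (G : Matrix (Fin m) (Fin n) (ZMod 2)) : SimpleGraph (Fin n) :=
  SimpleGraph.fromRel (fun i j => ∃ e, G e i ≠ 0 ∧ G e j ≠ 0)

/-- The canonical cyclic parity-check matrix `H_C = I + C` of the length-`n` repetition
code: `(H_C)_{i,j} = 1` iff `j = i` or `j = i + 1 (mod n)`. -/
def HC (n : ℕ) : Matrix (Fin n) (Fin n) (ZMod 2) :=
  (1 : Matrix (Fin n) (Fin n) (ZMod 2)) + (Matrix.of fun i j : Fin n => if (j : ℕ) = ((i : ℕ) + 1) % n then 1 else 0)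

mutual
inductive ETree (n m : ℕ) : Type
  | node : Fin n → EForest n m → ETree n m
inductive EForest (n m : ℕ) : Type
  | nil : EForest n m
  | cons : Fin m → ETree n m → EForest n m → EForest n m
end

namespace SkipT
variable {n m : ℕ}

abbrev Γ (n m : ℕ) := Fin n × Fin m × Fin n

def root : ETree n m → Fin n | .node v _ => v

mutual
def verts : ETree n m → List (Fin n)
  | .node v f => v :: vertsF f
def vertsF : EForest n m → List (Fin n)
  | .nil => []
  | .cons _ t f => verts t ++ vertsF f
end

mutual
def te : ETree n m → List (Γ n m)
  | .node u f => teF u f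
def teF (u : Fin n) : EForest n m → List (Γ n m)
  | .nil => []
  | .cons e t f => (u, e, root t) :: (te t ++ teF u f)
end

def lastSp (u : Fin n) : EForest n m → List (Γ n m)
  | .nil => []
  | .cons e t .nil => [(u, e, root t)]
  | .cons _ _ (.cons e' t' f') => lastSp u (.cons e' t' f')

def lastRoot (pv : Fin n) : EForest n m → Fin n
  | .nil => pv
  | .cons _ t f => lastRoot (root t) f

mutual
def tD : ETree n m → List (Fin n) × List (List (Γ n m)) × List (Γ n m)
  | .node u f => ((fD u [] f).1.cons u, (fD u [] f).2, lastSp u f)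
def fD (u : Fin n) (prevT : List (Γ n m)) : EForest n m → List (Fin n) × List (List (Γ n m))
  | .nil => ([], [])
  | .cons e t f =>
      ((tD t).1.reverse ++ (fD u [(u, e, root t)] f).1,
       (prevT ++ (u, e, root t) :: (tD t).2.2) :: ((tD t).2.1.reverse ++ (fD u [(u, e, root t)] f).2))
end

variable (G : Matrix (Fin m) (Fin n) (ZMod 2))

/-- indicator vector -/
def ind (x : Fin n) : Fin n → ZMod 2 := fun w => if w = x then 1 else 0

def EdgeOK (p : Fin n) (e : Fin m) (c : Fin n) : Prop :=
  ∀ w, G e w = ind p w + ind c w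

def gsum (s : List (Γ n m)) : Fin n → ZMod 2 := (s.map (fun ℓ => G ℓ.2.1)).sum

def cnt (S : List (List (Γ n m))) (ℓ : Γ n m) : ℕ := (S.map (fun s => s.count ℓ)).sum

def pairs : Fin n → List (Fin n) → List (Fin n → ZMod 2)
  | _, [] => []
  | a, b :: L => (ind a + ind b) :: pairs b L

def pairsAll : List (Fin n) → List (Fin n → ZMod 2)
  | [] => []
  | a :: L => pairs a L

mutual
def TOK : ETree n m → Prop
  | .node u f => FOK u f
def FOK (u : Fin n) : EForest n m → Prop
  | .nil => True
  | .cons e t f => EdgeOK G u e (root t) ∧ TOK t ∧ FOK u f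
end

-- basic lemmas
lemma ind_add_self (x : Fin n) : ind x + ind x = 0 := by
  funext w; simp [ind]; split <;> decide

lemma verts_cons (t : ETree n m) : verts t = root t :: (verts t).tail := by
  cases t with | node v f => simp [verts, root]

lemma verts_ne_nil (t : ETree n m) : verts t ≠ [] := by
  cases t with | node v f => simp [verts]

lemma gsum_nil : gsum G [] = 0 := by simp [gsum]
lemma gsum_cons (ℓ : Γ n m) (s : List (Γ n m)) : gsum G (ℓ :: s) = G ℓ.2.1 + gsum G s := by
  simp [gsum]
lemma gsum_append (s s' : List (Γ n m)) : gsum G (s ++ s') = gsum G s + gsum G s' := by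
  simp [gsum]

lemma cnt_nil (ℓ : Γ n m) : cnt [] ℓ = 0 := rfl
lemma cnt_cons (s : List (Γ n m)) (S : List (List (Γ n m))) (ℓ : Γ n m) :
    cnt (s :: S) ℓ = s.count ℓ + cnt S ℓ := by simp [cnt]
lemma cnt_append (S S' : List (List (Γ n m))) (ℓ : Γ n m) :
    cnt (S ++ S') ℓ = cnt S ℓ + cnt S' ℓ := by simp [cnt]
lemma cnt_reverse (S : List (List (Γ n m))) (ℓ : Γ n m) :
    cnt S.reverse ℓ = cnt S ℓ := by simp [cnt, List.map_reverse, List.sum_reverse]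

lemma cnt_eq_zero (S : List (List (Γ n m))) (ℓ : Γ n m) (h : ∀ s ∈ S, ℓ ∉ s) : cnt S ℓ = 0 := by
  induction S with
  | nil => rfl
  | cons s S ih =>
      rw [cnt_cons, List.count_eq_zero.2 (h s (by simp)), ih (fun s hs => h s (by simp [hs]))]

lemma pairs_length (a : Fin n) (L : List (Fin n)) : (pairs a L).length = L.length := by
  induction L generalizing a with
  | nil => rfl
  | cons b L ih => simp [pairs, ih]

lemma pairs_append (a : Fin n) (M N : List (Fin n)) :
    pairs a (M ++ N) = pairs a M ++ pairs (M.getLastD a) N := by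
  induction M generalizing a with
  | nil => simp [pairs]
  | cons b M ih =>
      show (ind a + ind b) :: pairs b (M ++ N) = ((ind a + ind b) :: pairs b M) ++ _
      rw [ih b, List.getLastD_cons, List.cons_append]

lemma pairsAll_append (M N : List (Fin n)) (hM : M ≠ []) (d : Fin n) :
    pairsAll (M ++ N) = pairsAll M ++ pairs (M.getLastD d) N := by
  cases M with
  | nil => simp at hM
  | cons a M =>
      show pairs a (M ++ N) = pairs a M ++ _
      rw [pairs_append, List.getLastD_cons]

lemma pairs_comm (a b : Fin n) (L : List (Fin n)) :
    (ind a + ind b) = (ind b + ind a) := add_comm _ _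

lemma pairsAll_reverse (L : List (Fin n)) : (pairsAll L).reverse = pairsAll L.reverse := by
  induction L with
  | nil => rfl
  | cons a L ih =>
      cases L with
      | nil => rfl
      | cons b L =>
          have h1 : pairsAll (a :: b :: L) = (ind a + ind b) :: pairsAll (b :: L) := rfl
          have h2 : (a :: b :: L).reverse = (b :: L).reverse ++ [a] := by simp
          rw [h1, h2, pairsAll_append _ _ (by simp) b]
          simp only [List.reverse_cons] at ih ⊢
          rw [← ih]
          have : (((b :: L).reverse).getLastD b) = b := by
            simp [List.getLastD_eq_getLast?, List.getLast?_reverse]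
          rw [show ((L.reverse ++ [b]).getLastD b) = b by
            rw [List.getLastD_eq_getLast?, List.getLast?_concat]; rfl]
          show _ = _ ++ [ind b + ind a]
          rw [add_comm]


-- child components of tree edges are exactly the non-root vertices
mutual
theorem chT (t : ETree n m) : (te t).map (fun ℓ => ℓ.2.2) = (verts t).tail := by
  cases t with
  | node u f => simpa [te, verts] using chF u f
  termination_by sizeOf t
theorem chF (u : Fin n) (f : EForest n m) : (teF u f).map (fun ℓ => ℓ.2.2) = vertsF f := by
  cases f with
  | nil => rfl
  | cons e t f =>
      simp only [teF, vertsF, List.map_cons, List.map_append, chT t, chF u f]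
      rw [← List.cons_append, ← verts_cons t]
  termination_by sizeOf f
end

-- parent components are vertices
mutual
theorem paT (t : ETree n m) : ∀ ℓ ∈ te t, ℓ.1 ∈ verts t := by
  cases t with
  | node u f => intro ℓ hℓ; rw [verts_cons]; exact paF u f ℓ hℓ
  termination_by sizeOf t
theorem paF (u : Fin n) (f : EForest n m) : ∀ ℓ ∈ teF u f, ℓ.1 ∈ u :: vertsF f := by
  cases f with
  | nil => intro ℓ hℓ; simp [teF] at hℓ
  | cons e t f =>
      intro ℓ hℓ
      simp only [teF, List.mem_cons, List.mem_append] at hℓ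
      rcases hℓ with h | h | h
      · subst h; simp
      · have := paT t ℓ h
        simp [vertsF, this]
      · have := paF u f ℓ h
        simp only [List.mem_cons] at this
        rcases this with h' | h' <;> simp [vertsF, h']
  termination_by sizeOf f
end

theorem chT_mem (t : ETree n m) {ℓ : Γ n m} (h : ℓ ∈ te t) : ℓ.2.2 ∈ (verts t).tail := by
  rw [← chT]; exact List.mem_map_of_mem h

theorem chF_mem (u : Fin n) (f : EForest n m) {ℓ : Γ n m} (h : ℓ ∈ teF u f) : ℓ.2.2 ∈ vertsF f := by
  rw [← chF u f]; exact List.mem_map_of_mem h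

-- all tree edges satisfy EdgeOK
mutual
theorem teOKT (t : ETree n m) (h : TOK G t) : ∀ ℓ ∈ te t, EdgeOK G ℓ.1 ℓ.2.1 ℓ.2.2 := by
  cases t with
  | node u f => exact teOKF u f h
  termination_by sizeOf t
theorem teOKF (u : Fin n) (f : EForest n m) (h : FOK G u f) :
    ∀ ℓ ∈ teF u f, EdgeOK G ℓ.1 ℓ.2.1 ℓ.2.2 := by
  cases f with
  | nil => intro ℓ hℓ; simp [teF] at hℓ
  | cons e t f =>
      obtain ⟨h1, h2, h3⟩ := h
      intro ℓ hℓ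
      simp only [teF, List.mem_cons, List.mem_append] at hℓ
      rcases hℓ with h' | h' | h'
      · subst h'; exact h1
      · exact teOKT t h2 ℓ h'
      · exact teOKF u f h3 ℓ h'
  termination_by sizeOf f
end

-- F4 : parent index < child index
mutual
theorem idxT (t : ETree n m) (hnd : (verts t).Nodup) :
    ∀ ℓ ∈ te t, (verts t).idxOf ℓ.1 < (verts t).idxOf ℓ.2.2 := by
  cases t with
  | node u f => rw [show verts (ETree.node u f) = u :: vertsF f from rfl] at hnd ⊢
                exact idxF u f hnd
  termination_by sizeOf t
theorem idxF (u : Fin n) (f : EForest n m) (hnd : (u :: vertsF f).Nodup) :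
    ∀ ℓ ∈ teF u f, (u :: vertsF f).idxOf ℓ.1 < (u :: vertsF f).idxOf ℓ.2.2 := by
  cases f with
  | nil => intro ℓ hℓ; simp [teF] at hℓ
  | cons e t f =>
      intro ℓ hℓ
      have hvf : vertsF (EForest.cons e t f) = verts t ++ vertsF f := rfl
      rw [hvf] at hnd ⊢
      -- nodup pieces
      have hu : u ∉ verts t ++ vertsF f := (List.nodup_cons.1 hnd).1
      have hnd' : (verts t ++ vertsF f).Nodup := (List.nodup_cons.1 hnd).2
      have hndt : (verts t).Nodup := hnd'.of_append_left
      have hndf : (vertsF f).Nodup := hnd'.of_append_right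
      have hdisj : ∀ x ∈ verts t, x ∉ vertsF f := by
        intro x hx hx'
        exact (List.disjoint_of_nodup_append hnd') hx hx'
      simp only [teF, List.mem_cons, List.mem_append] at hℓ
      rcases hℓ with h' | h' | h'
      · -- spoke (u, e, root t)
        subst h'
        simp only [List.idxOf_cons_self]
        have : root t ≠ u := by
          intro hc; apply hu; rw [← hc]; exact List.mem_append_left _ (by rw [verts_cons]; simp)
        rw [List.idxOf_cons_ne _ (Ne.symm this)]
        omega
      · -- edge inside t
        have hp := paT t ℓ h'
        have hc : ℓ.2.2 ∈ verts t := by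
          have := chT_mem t h'; exact List.mem_of_mem_tail this
        have hpu : ℓ.1 ≠ u := fun hc' => hu (hc' ▸ List.mem_append_left _ hp)
        have hcu : ℓ.2.2 ≠ u := fun hc' => hu (hc' ▸ List.mem_append_left _ hc)
        rw [List.idxOf_cons_ne _ (Ne.symm hpu), List.idxOf_cons_ne _ (Ne.symm hcu),
          List.idxOf_append_of_mem hp, List.idxOf_append_of_mem hc]
        have := idxT t hndt ℓ h'
        omega
      · -- edge in rest of forest
        have hp := paF u f ℓ h'
        have hc : ℓ.2.2 ∈ vertsF f := chF_mem u f h'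
        have hcnt : ℓ.2.2 ∉ verts t := fun hc' => hdisj _ hc' hc
        have hcu : ℓ.2.2 ≠ u := by
          intro hc'; apply hu; rw [← hc']; exact List.mem_append_right _ hc
        have hnd2 : (u :: vertsF f).Nodup := by
          rw [List.nodup_cons]
          exact ⟨fun hx => hu (List.mem_append_right _ hx), hndf⟩
        have hIH := idxF u f hnd2 ℓ h'
        rw [List.idxOf_cons_ne _ (Ne.symm hcu), List.idxOf_append_of_notMem hcnt]
        rcases List.mem_cons.1 hp with hp' | hp'
        · rw [hp', List.idxOf_cons_self]; omega
        · have hpnt : ℓ.1 ∉ verts t := fun hc' => hdisj _ hc' hp'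
          have hpu : ℓ.1 ≠ u := by
            intro hc'; apply hu; rw [← hc']; exact List.mem_append_right _ hp'
          rw [List.idxOf_cons_ne _ (Ne.symm hpu), List.idxOf_append_of_notMem hpnt]
          rw [List.idxOf_cons_ne _ (Ne.symm hcu), List.idxOf_cons_ne _ (Ne.symm hpu)] at hIH
          omega
  termination_by sizeOf f
end

-- misc helper lemmas
lemma getLastD_append' {α : Type*} (A B : List α) (d : α) :
    (A ++ B).getLastD d = B.getLastD (A.getLastD d) := by
  induction A generalizing d with
  | nil => simp
  | cons a A ih => rw [List.cons_append, List.getLastD_cons, List.getLastD_cons, ih]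

lemma getLastD_reverse' {α : Type*} (l : List α) (d : α) :
    l.reverse.getLastD d = l.headD d := by
  rw [List.getLastD_eq_getLast?, List.getLast?_reverse]
  cases l <;> rfl

lemma pairs_rev (pv d : Fin n) (L : List (Fin n)) (hL : L ≠ []) :
    pairs pv L.reverse = (ind (L.getLastD d) + ind pv) :: (pairsAll L).reverse := by
  have h1 : pv :: L.reverse = (L ++ [pv]).reverse := by simp
  have h2 : pairs pv L.reverse = pairsAll ((L ++ [pv]).reverse) := by rw [← h1]; rfl
  rw [h2, ← pairsAll_reverse, pairsAll_append L [pv] hL d]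
  simp [pairs]

theorem lastSp_len (u : Fin n) (f : EForest n m) : (lastSp u f).length ≤ 1 := by
  cases f with
  | nil => simp [lastSp]
  | cons e t f =>
      cases f with
      | nil => simp [lastSp]
      | cons e' t' f' => simpa [lastSp] using lastSp_len u (.cons e' t' f')
termination_by sizeOf f

theorem lastSp_sub (u : Fin n) (f : EForest n m) : ∀ ℓ ∈ lastSp u f, ℓ ∈ teF u f := by
  cases f with
  | nil => simp [lastSp]
  | cons e t f =>
      cases f with
      | nil => simp [lastSp, teF]
      | cons e' t' f' =>
          intro ℓ hℓ
          rw [show lastSp u (.cons e t (.cons e' t' f')) = lastSp u (.cons e' t' f') from rfl] at hℓ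
          have := lastSp_sub u (.cons e' t' f') ℓ hℓ
          simp only [teF, List.mem_cons, List.mem_append] at this ⊢
          tauto
termination_by sizeOf f

lemma lastRoot_indep (pv pv' : Fin n) (f : EForest n m) (h : f ≠ .nil) :
    lastRoot pv f = lastRoot pv' f := by
  cases f with
  | nil => exact absurd rfl h
  | cons e t f => rfl

theorem gsum_lastSp (u : Fin n) (f : EForest n m) (hok : FOK G u f) :
    gsum G (lastSp u f) = ind u + ind (lastRoot u f) := by
  cases f with
  | nil => simp [lastSp, lastRoot, gsum, (ind_add_self u).symm]
  | cons e t f =>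
      obtain ⟨h1, h2, h3⟩ := hok
      cases f with
      | nil =>
          simp only [lastSp, lastRoot]
          funext w; simpa [gsum] using h1 w
      | cons e' t' f' =>
          rw [show lastSp u (.cons e t (.cons e' t' f')) = lastSp u (.cons e' t' f') from rfl,
            gsum_lastSp u (.cons e' t' f') h3, show lastRoot u (.cons e t (.cons e' t' f')) = lastRoot (root t) (.cons e' t' f') from rfl]
          rw [lastRoot_indep (root t) u _ (by simp)]
termination_by sizeOf f

lemma zmod2_quad : ∀ a b c d : ZMod 2, a + b + (b + c + (c + d)) = d + a := by decide

lemma perm_ne_nil {l l' : List (Fin n)} (h : l.Perm l') (h' : l' ≠ []) : l ≠ [] := by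
  intro hc; subst hc; exact h' h.symm.eq_nil

mutual
theorem tD_ok (t : ETree n m) (hok : TOK G t) (hnd : (verts t).Nodup) :
    (tD t).1.Perm (verts t) ∧
    (tD t).1.head? = some (root t) ∧
    (tD t).2.1.map (gsum G) = pairsAll (tD t).1 ∧
    (∀ s ∈ (tD t).2.1, s.length ≤ 3) ∧
    (∀ ℓ ∈ (tD t).2.1.flatten, ℓ ∈ te t) ∧
    (∀ ℓ, cnt (tD t).2.1 ℓ + (tD t).2.2.count ℓ ≤ 2) ∧
    gsum G (tD t).2.2 = ind (root t) + ind ((tD t).1.getLastD (root t)) ∧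
    (tD t).2.2.length ≤ 1 ∧
    (∀ ℓ ∈ (tD t).2.2, ℓ ∈ te t) := by
  cases t with
  | node u f =>
    have hok' : FOK G u f := hok
    have hnd' : (u :: vertsF f).Nodup := hnd
    have hu : u ∉ vertsF f := (List.nodup_cons.1 hnd').1
    obtain ⟨F1, F2, F3, F4, F5, F6⟩ :=
      fD_ok u f hok' hnd' u [] (by simp [gsum, (ind_add_self u).symm]) (by simp)
        (by simp) hu
    refine ⟨?_, rfl, ?_, F3, ?_, ?_, ?_, lastSp_len u f, lastSp_sub u f⟩
    · exact F1.cons u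
    · exact F2
    · exact fun ℓ hℓ => (F4 ℓ hℓ).resolve_left (by simp)
    · intro ℓ
      have := F5 ℓ
      simpa [tD] using this
    · show gsum G (lastSp u f) = ind u + ind ((u :: (fD u [] f).1).getLastD u)
      rw [List.getLastD_cons, F6]
      exact gsum_lastSp G u f hok'
  termination_by sizeOf t

theorem fD_ok (u : Fin n) (f : EForest n m) (hok : FOK G u f)
    (hnd : (u :: vertsF f).Nodup) (pv : Fin n) (prevT : List (Γ n m))
    (hp1 : gsum G prevT = ind pv + ind u) (hp2 : prevT.length ≤ 1)
    (hp3 : ∀ ℓ ∈ prevT, ℓ.2.2 = pv) (hp4 : pv ∉ vertsF f) :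
    (fD u prevT f).1.Perm (vertsF f) ∧
    (fD u prevT f).2.map (gsum G) = pairs pv (fD u prevT f).1 ∧
    (∀ s ∈ (fD u prevT f).2, s.length ≤ 3) ∧
    (∀ ℓ ∈ (fD u prevT f).2.flatten, ℓ ∈ prevT ∨ ℓ ∈ teF u f) ∧
    (∀ ℓ, cnt (fD u prevT f).2 ℓ + prevT.count ℓ + (lastSp u f).count ℓ ≤ 2) ∧
    (fD u prevT f).1.getLastD pv = lastRoot pv f := by
  cases f with
  | nil =>
      refine ⟨by simp [fD, vertsF], by simp [fD, pairs], by simp [fD], by simp [fD], ?_,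
        by simp [fD, lastRoot]⟩
      intro ℓ
      have h1 : prevT.count ℓ ≤ prevT.length := List.count_le_length
      simp only [fD, cnt, lastSp, List.map_nil, List.sum_nil, List.count_nil]
      omega
  | cons e t f' =>
      have hOK1 : EdgeOK G u e (root t) := hok.1
      have hOK2 : TOK G t := hok.2.1
      have hOK3 : FOK G u f' := hok.2.2
      have hvf : vertsF (EForest.cons e t f') = verts t ++ vertsF f' := rfl
      rw [hvf] at hnd hp4 ⊢
      have hu : u ∉ verts t ++ vertsF f' := (List.nodup_cons.1 hnd).1
      have hnd' : (verts t ++ vertsF f').Nodup := (List.nodup_cons.1 hnd).2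
      have hndt : (verts t).Nodup := hnd'.of_append_left
      have hndf : (vertsF f').Nodup := hnd'.of_append_right
      have hdisj : ∀ x ∈ verts t, x ∉ vertsF f' := by
        intro x hx hx'
        exact (List.disjoint_of_nodup_append hnd') hx hx'
      have hnd2 : (u :: vertsF f').Nodup := by
        rw [List.nodup_cons]
        exact ⟨fun hx => hu (List.mem_append_right _ hx), hndf⟩
      have hpvt : pv ∉ verts t := fun h => hp4 (List.mem_append_left _ h)
      have hpvf : pv ∉ vertsF f' := fun h => hp4 (List.mem_append_right _ h)
      have hrt : root t ∈ verts t := by rw [verts_cons]; simp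
      have hrtf : root t ∉ vertsF f' := fun h => hdisj _ hrt h
      have hrtt : root t ∉ (verts t).tail := by
        have := hndt
        rw [verts_cons t] at this
        exact (List.nodup_cons.1 this).1
      obtain ⟨T1, T2, T3, T4, T5, T6, T7, T8, T9⟩ := tD_ok t hOK2 hndt
      have hLne : (tD t).1 ≠ [] := perm_ne_nil T1 (verts_ne_nil t)
      obtain ⟨F1, F2, F3, F4, F5, F6⟩ :=
        fD_ok u f' hOK3 hnd2 (root t) [(u, e, root t)]
          (by funext w; simp only [gsum, List.map_cons, List.map_nil, List.sum_cons,
                List.sum_nil, add_zero]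
              rw [hOK1 w]; exact add_comm _ _)
          (by simp) (by intro ℓ hℓ; simp at hℓ; subst hℓ; rfl) hrtf
      -- abbreviations
      have hheadD : (tD t).1.headD pv = root t := by
        rw [List.headD_eq_head?_getD, T2]; rfl
      have hrevlast : (tD t).1.reverse.getLastD pv = root t := by
        rw [getLastD_reverse']; exact hheadD
      constructor
      · -- permutation
        exact List.Perm.append ((List.reverse_perm _).trans T1) F1
      constructor
      · -- chain
        show (((prevT ++ (u, e, root t) :: (tD t).2.2) :: ((tD t).2.1.reverse ++ (fD u [(u, e, root t)] f').2)).map (gsum G))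
          = pairs pv ((tD t).1.reverse ++ (fD u [(u, e, root t)] f').1)
        rw [List.map_cons, List.map_append, List.map_reverse, T3, pairs_append,
          hrevlast, F2, pairs_rev pv (root t) _ hLne]
        congr 1
        rw [gsum_append, gsum_cons]
        rw [hp1, T7, show G (u, e, root t).2.1 = ind u + ind (root t) from funext hOK1]
        funext w
        exact zmod2_quad _ _ _ _
      constructor
      · -- step lengths
        intro s hs
        rcases List.mem_cons.1 hs with hs | hs
        · subst hs
          have h1 : (tD t).2.2.length ≤ 1 := T8
          simp only [List.length_append, List.length_cons]
          omega
        · rcases List.mem_append.1 hs with hs | hs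
          · exact T4 s (List.mem_reverse.1 hs)
          · exact F3 s hs
      constructor
      · -- membership
        intro ℓ hℓ
        have hℓ : ℓ ∈ ((prevT ++ (u, e, root t) :: (tD t).2.2) :: ((tD t).2.1.reverse ++ (fD u [(u, e, root t)] f').2)).flatten := hℓ
        rw [List.flatten_cons] at hℓ
        have hspoke : (u, e, root t) ∈ teF u (EForest.cons e t f') := by simp [teF]
        have hsub1 : ∀ ℓ' ∈ te t, ℓ' ∈ teF u (EForest.cons e t f') := by
          intro ℓ' h'; simp [teF, h']
        have hsub2 : ∀ ℓ' ∈ teF u f', ℓ' ∈ teF u (EForest.cons e t f') := by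
          intro ℓ' h'; simp [teF, h']
        rcases List.mem_append.1 hℓ with hℓ | hℓ
        swap
        · rw [List.flatten_append] at hℓ
          rcases List.mem_append.1 hℓ with hℓ | hℓ
          · have : ℓ ∈ (tD t).2.1.flatten := by
              rw [List.mem_flatten] at hℓ ⊢
              obtain ⟨s, hs, h⟩ := hℓ
              exact ⟨s, List.mem_reverse.1 hs, h⟩
            exact Or.inr (hsub1 _ (T5 _ this))
          · rcases F4 ℓ hℓ with h | h
            · simp at h; subst h; exact Or.inr hspoke
            · exact Or.inr (hsub2 _ h)
        · rcases List.mem_append.1 hℓ with h | h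
          · exact Or.inl h
          · rcases List.mem_cons.1 h with h | h
            · subst h; exact Or.inr hspoke
            · exact Or.inr (hsub1 _ (T9 _ h))
      constructor
      · -- counts
        intro ℓ
        have hcnt : cnt (fD u prevT (EForest.cons e t f')).2 ℓ
            = prevT.count ℓ + ((tD t).2.2.count ℓ + (if (u, e, root t) = ℓ then 1 else 0))
              + (cnt (tD t).2.1 ℓ + cnt (fD u [(u, e, root t)] f').2 ℓ) := by
          show cnt ((prevT ++ (u, e, root t) :: (tD t).2.2) :: ((tD t).2.1.reverse ++ (fD u [(u, e, root t)] f').2)) ℓ = _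
          rw [cnt_cons, cnt_append, cnt_reverse, List.count_append, List.count_cons]
          simp only [beq_iff_eq]
          all_goals ring
        rw [hcnt]
        -- helper facts
        have memS : cnt (tD t).2.1 ℓ ≠ 0 → ℓ ∈ te t := by
          intro h
          by_contra hc
          exact h (cnt_eq_zero _ _ (fun s hs hmem => hc (T5 ℓ (List.mem_flatten_of_mem hs hmem))))
        have memF : (tD t).2.2.count ℓ ≠ 0 → ℓ ∈ te t := by
          intro h
          exact T9 ℓ (List.count_pos_iff.1 (Nat.pos_of_ne_zero h))
        have memS2 : cnt (fD u [(u, e, root t)] f').2 ℓ ≠ 0 →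
            ℓ = (u, e, root t) ∨ ℓ ∈ teF u f' := by
          intro h
          have : ℓ ∈ (fD u [(u, e, root t)] f').2.flatten := by
            by_contra hc
            exact h (cnt_eq_zero _ _ (fun s hs hmem => hc (List.mem_flatten_of_mem hs hmem)))
          rcases F4 ℓ this with h' | h'
          · simp at h'; exact Or.inl h'
          · exact Or.inr h'
        have hchild_t : ℓ ∈ te t → ℓ.2.2 ∈ verts t :=
          fun h => List.mem_of_mem_tail (chT_mem t h)
        have hchild_f : ℓ ∈ teF u f' → ℓ.2.2 ∈ vertsF f' := fun h => chF_mem u f' h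
        have hF5 := F5 ℓ
        by_cases hA : ℓ ∈ prevT
        · -- ℓ is the previous spoke
          have hpv : ℓ.2.2 = pv := hp3 ℓ hA
          have h1 : ℓ ∉ te t := fun h => hpvt (hpv ▸ hchild_t h)
          have h2 : ℓ ∉ teF u f' := fun h => hpvf (hpv ▸ hchild_f h)
          have h3 : ℓ ≠ (u, e, root t) := by
            intro h; apply hpvt; rw [← hpv, h]; exact hrt
          have e1 : (tD t).2.2.count ℓ = 0 := by
            by_contra hc; exact h1 (memF hc)
          have e2 : cnt (tD t).2.1 ℓ = 0 := by
            by_contra hc; exact h1 (memS hc)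
          have e3 : cnt (fD u [(u, e, root t)] f').2 ℓ = 0 := by
            by_contra hc; rcases memS2 hc with h | h; exact h3 h; exact h2 h
          have e4 : (lastSp u (EForest.cons e t f')).count ℓ = 0 := by
            apply List.count_eq_zero_of_not_mem
            intro hmem
            have := lastSp_sub u _ ℓ hmem
            simp only [teF, List.mem_cons, List.mem_append] at this
            rcases this with h | h | h
            · exact h3 h
            · exact h1 h
            · exact h2 h
          have e5 : prevT.count ℓ ≤ 1 := le_trans (List.count_le_length) hp2
          rw [if_neg (fun hh => h3 hh.symm)]
          omega
        · have e0 : prevT.count ℓ = 0 := List.count_eq_zero_of_not_mem hA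
          by_cases hB : ℓ = (u, e, root t)
          · -- ℓ is the current spoke
            have h1 : ℓ ∉ te t := by
              intro h
              apply hrtt
              have := chT_mem t h
              rw [hB] at this
              exact this
            have e1 : (tD t).2.2.count ℓ = 0 := by
              by_contra hc; exact h1 (memF hc)
            have e2 : cnt (tD t).2.1 ℓ = 0 := by
              by_contra hc; exact h1 (memS hc)
            rw [if_pos hB.symm, e0, e1, e2]
            -- use F5 : cnt S₂ ℓ + [(u,e,root t)].count ℓ + lastSp(f').count ℓ ≤ 2
            have : [(u, e, root t)].count ℓ = 1 := by rw [hB]; simp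
            cases f' with
            | nil =>
                have e3 : cnt (fD u [(u, e, root t)] EForest.nil).2 ℓ = 0 := by
                  show cnt [] ℓ = 0; rfl
                have e4 : (lastSp u (EForest.cons e t EForest.nil)).count ℓ = 1 := by
                  simp [lastSp, hB]
                omega
            | cons e2' t2' f2' =>
                have e4 : (lastSp u (EForest.cons e t (EForest.cons e2' t2' f2'))).count ℓ
                    = (lastSp u (EForest.cons e2' t2' f2')).count ℓ := rfl
                have e5 : (lastSp u (EForest.cons e2' t2' f2')).count ℓ = 0 := by
                  apply List.count_eq_zero_of_not_mem
                  intro hmem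
                  have hc := chF_mem u _ (lastSp_sub u _ ℓ hmem)
                  rw [hB] at hc
                  exact hrtf hc
                rw [this, e5] at hF5
                rw [e4, e5]
                omega
          · rw [if_neg (fun hh => hB hh.symm), e0]
            have hsp1 : [(u, e, root t)].count ℓ = 0 := by
              apply List.count_eq_zero_of_not_mem; simpa using hB
            by_cases hC : ℓ ∈ te t
            · -- internal edge of t
              have hcv : ℓ.2.2 ∈ verts t := hchild_t hC
              have h2 : ℓ ∉ teF u f' := fun h => hdisj _ hcv (hchild_f h)
              have e3 : cnt (fD u [(u, e, root t)] f').2 ℓ = 0 := by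
                by_contra hc; rcases memS2 hc with h | h; exact hB h; exact h2 h
              have e4 : (lastSp u (EForest.cons e t f')).count ℓ = 0 := by
                cases f' with
                | nil =>
                    apply List.count_eq_zero_of_not_mem
                    intro hmem
                    rw [show lastSp u (EForest.cons e t EForest.nil) = [(u, e, root t)] from rfl] at hmem
                    simp at hmem
                    exact hB hmem
                | cons a b c =>
                    apply List.count_eq_zero_of_not_mem
                    intro hmem
                    rw [show lastSp u (EForest.cons e t (EForest.cons a b c)) = lastSp u (EForest.cons a b c) from rfl] at hmem
                    exact hdisj _ hcv (chF_mem u _ (lastSp_sub u _ ℓ hmem))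
              have := T6 ℓ
              omega
            · have e1 : (tD t).2.2.count ℓ = 0 := by
                by_contra hc; exact hC (memF hc)
              have e2 : cnt (tD t).2.1 ℓ = 0 := by
                by_contra hc; exact hC (memS hc)
              rw [e1, e2]
              cases f' with
              | nil =>
                  have e3 : cnt (fD u [(u, e, root t)] EForest.nil).2 ℓ = 0 := by
                    show cnt [] ℓ = 0; rfl
                  have e4 : (lastSp u (EForest.cons e t EForest.nil)).count ℓ = 0 := by
                    apply List.count_eq_zero_of_not_mem
                    rw [show lastSp u (EForest.cons e t EForest.nil) = [(u, e, root t)] from rfl]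
                    simpa using hB
                  omega
              | cons e2' t2' f2' =>
                  have e4 : (lastSp u (EForest.cons e t (EForest.cons e2' t2' f2'))).count ℓ
                      = (lastSp u (EForest.cons e2' t2' f2')).count ℓ := rfl
                  rw [hsp1] at hF5
                  omega
      · -- getLastD
        show ((tD t).1.reverse ++ (fD u [(u, e, root t)] f').1).getLastD pv
          = lastRoot pv (EForest.cons e t f')
        rw [getLastD_append', hrevlast, F6]
        rfl
  termination_by sizeOf f
end

-- ## grafting a leaf onto a tree
mutual
def graftT (u : Fin n) (e : Fin m) (v : Fin n) : ETree n m → ETree n m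
  | .node w f =>
      if w = u then .node w (.cons e (.node v .nil) (graftF u e v f))
      else .node w (graftF u e v f)
def graftF (u : Fin n) (e : Fin m) (v : Fin n) : EForest n m → EForest n m
  | .nil => .nil
  | .cons e' t f => .cons e' (graftT u e v t) (graftF u e v f)
end

mutual
theorem graftT_id (u : Fin n) (e : Fin m) (v : Fin n) (t : ETree n m) (h : u ∉ verts t) :
    graftT u e v t = t := by
  cases t with
  | node w f =>
      have hw : w ≠ u := by
        intro hc; apply h; rw [hc]; show u ∈ u :: vertsF f; simp
      have hf : u ∉ vertsF f := by
        intro hc; apply h; show u ∈ w :: vertsF f; simp [hc]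
      rw [graftT, if_neg hw, graftF_id u e v f hf]
  termination_by sizeOf t
theorem graftF_id (u : Fin n) (e : Fin m) (v : Fin n) (f : EForest n m) (h : u ∉ vertsF f) :
    graftF u e v f = f := by
  cases f with
  | nil => rfl
  | cons e' t f =>
      have h1 : u ∉ verts t := by
        intro hc; apply h; show u ∈ verts t ++ vertsF f; simp [hc]
      have h2 : u ∉ vertsF f := by
        intro hc; apply h; show u ∈ verts t ++ vertsF f; simp [hc]
      rw [graftF, graftT_id u e v t h1, graftF_id u e v f h2]
  termination_by sizeOf f
end

mutual
theorem graftT_verts (u : Fin n) (e : Fin m) (v : Fin n) (t : ETree n m)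
    (hnd : (verts t).Nodup) (hu : u ∈ verts t) :
    (verts (graftT u e v t)).Perm (v :: verts t) := by
  cases t with
  | node w f =>
      have hnd' : (w :: vertsF f).Nodup := hnd
      by_cases hw : w = u
      · have hf : u ∉ vertsF f := by
          rw [← hw]; exact (List.nodup_cons.1 hnd').1
        rw [graftT, if_pos hw, graftF_id u e v f hf]
        show (w :: (v :: vertsF f)).Perm (v :: w :: vertsF f)
        exact List.Perm.swap v w _
      · have hf : u ∈ vertsF f := by
          rcases List.mem_cons.1 (show u ∈ w :: vertsF f from hu) with h | h
          · exact absurd h.symm hw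
          · exact h
        rw [graftT, if_neg hw]
        show (w :: vertsF (graftF u e v f)).Perm (v :: w :: vertsF f)
        have := graftF_verts u e v f (List.nodup_cons.1 hnd').2 hf
        exact (this.cons w).trans (List.Perm.swap v w _)
  termination_by sizeOf t
theorem graftF_verts (u : Fin n) (e : Fin m) (v : Fin n) (f : EForest n m)
    (hnd : (vertsF f).Nodup) (hu : u ∈ vertsF f) :
    (vertsF (graftF u e v f)).Perm (v :: vertsF f) := by
  cases f with
  | nil => simp [vertsF] at hu
  | cons e' t f =>
      have hnd' : (verts t ++ vertsF f).Nodup := hnd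
      have hndt := hnd'.of_append_left
      have hndf := hnd'.of_append_right
      by_cases ht : u ∈ verts t
      · have hf : u ∉ vertsF f := fun hc => (List.disjoint_of_nodup_append hnd') ht hc
        rw [graftF, graftF_id u e v f hf]
        show (verts (graftT u e v t) ++ vertsF f).Perm (v :: (verts t ++ vertsF f))
        have := graftT_verts u e v t hndt ht
        exact (this.append_right _).trans (by rw [List.cons_append])
      · have hf : u ∈ vertsF f := by
          rcases List.mem_append.1 (show u ∈ verts t ++ vertsF f from hu) with h | h
          · exact absurd h ht
          · exact h
        rw [graftF, graftT_id u e v t ht]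
        show (verts t ++ vertsF (graftF u e v f)).Perm (v :: (verts t ++ vertsF f))
        have := graftF_verts u e v f hndf hf
        exact ((this.append_left _)).trans List.perm_middle
  termination_by sizeOf f
end

mutual
theorem graftT_ok (u : Fin n) (e : Fin m) (v : Fin n) (t : ETree n m)
    (hok : TOK G t) (he : EdgeOK G u e v) : TOK G (graftT u e v t) := by
  cases t with
  | node w f =>
      by_cases hw : w = u
      · rw [graftT, if_pos hw]
        show FOK G w (.cons e (.node v .nil) (graftF u e v f))
        refine ⟨by rw [hw]; exact he, trivial, graftF_ok u e v w f hok he⟩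
      · rw [graftT, if_neg hw]
        exact graftF_ok u e v w f hok he
  termination_by sizeOf t
theorem graftF_ok (u : Fin n) (e : Fin m) (v : Fin n) (w : Fin n) (f : EForest n m)
    (hok : FOK G w f) (he : EdgeOK G u e v) : FOK G w (graftF u e v f) := by
  cases f with
  | nil => trivial
  | cons e' t f =>
      obtain ⟨h1, h2, h3⟩ := hok
      have hroot : root (graftT u e v t) = root t := by
        cases t with
        | node a b => rw [graftT]; split <;> rfl
      exact ⟨by rw [hroot]; exact h1, graftT_ok u e v t h2 he, graftF_ok u e v w f h3 he⟩
  termination_by sizeOf f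
end

-- ## extracting edges from the graph
lemma zmod2_ne_zero {x : ZMod 2} (h : x ≠ 0) : x = 1 := by revert h; revert x; decide

lemma edgeOK_of {e : Fin m} {u v : Fin n} (h2 : hwt (G e) = 2)
    (hu : G e u ≠ 0) (hv : G e v ≠ 0) (huv : u ≠ v) : EdgeOK G u e v := by
  have hsub : ({u, v} : Finset (Fin n)) ⊆ Finset.univ.filter (fun w => G e w ≠ 0) := by
    intro w hw
    simp only [Finset.mem_insert, Finset.mem_singleton] at hw
    rcases hw with h | h <;> subst h <;> simp [hu, hv]
  have heq : ({u, v} : Finset (Fin n)) = Finset.univ.filter (fun w => G e w ≠ 0) :=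
    Finset.eq_of_subset_of_card_le hsub (by rw [show (Finset.univ.filter (fun w => G e w ≠ 0)).card = 2 from h2, Finset.card_pair huv])
  intro w
  by_cases hwu : w = u
  · subst hwu; rw [zmod2_ne_zero hu]; simp [ind, huv]
  · by_cases hwv : w = v
    · subst hwv; rw [zmod2_ne_zero hv]; simp [ind, hwu]
    · have : w ∉ Finset.univ.filter (fun w => G e w ≠ 0) := by
        rw [← heq]; simp [hwu, hwv]
      simp only [Finset.mem_filter, Finset.mem_univ, true_and, not_not] at this
      rw [this]; simp [ind, hwu, hwv]

lemma cross (hinc : IsIncidence G) (l : List (Fin n)) :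
    ∀ {a b : Fin n} (_ : (incGraph G).Walk a b), a ∈ l → b ∉ l →
      ∃ x ∈ l, ∃ y, y ∉ l ∧ ∃ e, EdgeOK G x e y := by
  intro a b p
  induction p with
  | nil => intro ha hb; exact absurd ha hb
  | @cons x y z h p ih =>
      intro ha hb
      by_cases hy : y ∈ l
      · exact ih hy hb
      · refine ⟨x, ha, y, hy, ?_⟩
        rw [incGraph, SimpleGraph.fromRel_adj] at h
        obtain ⟨hne, hor⟩ := h
        rcases hor with ⟨e, h1, h2⟩ | ⟨e, h1, h2⟩
        · exact ⟨e, edgeOK_of G (hinc e) h1 h2 hne⟩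
        · exact ⟨e, edgeOK_of G (hinc e) h2 h1 hne⟩

lemma grow (hinc : IsIncidence G) (hconn : (incGraph G).Connected) :
    ∀ (k : ℕ) (t : ETree n m), TOK G t → (verts t).Nodup → n = (verts t).length + k →
      ∃ t', TOK G t' ∧ (verts t').Nodup ∧ (verts t').length = n := by
  intro k
  induction k with
  | zero => intro t h1 h2 h3; exact ⟨t, h1, h2, h3.symm⟩
  | succ k ih =>
      intro t h1 h2 h3
      -- find a vertex not in the tree
      have hlt : (verts t).length < n := by omega
      have hex : ∃ v : Fin n, v ∉ verts t := by
        by_contra hc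
        push_neg at hc
        have hsub : (Finset.univ : Finset (Fin n)) ⊆ (verts t).toFinset := by
          intro w _; rw [List.mem_toFinset]; exact hc w
        have := Finset.card_le_card hsub
        rw [Finset.card_univ, Fintype.card_fin] at this
        have := List.toFinset_card_le (verts t)
        omega
      obtain ⟨v, hv⟩ := hex
      have hroot : root t ∈ verts t := by rw [verts_cons]; simp
      obtain ⟨w⟩ := hconn.preconnected (root t) v
      obtain ⟨x, hx, y, hy, e, he⟩ := cross G hinc (verts t) w hroot hv
      have hperm := graftT_verts x e y t h2 hx
      refine ih (graftT x e y t) (graftT_ok G x e y t h1 he) ?_ ?_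
      · rw [hperm.nodup_iff]
        exact List.nodup_cons.2 ⟨hy, h2⟩
      · rw [hperm.length_eq]
        simp only [List.length_cons]
        omega

-- ## injectivity of edge indices among tree edges
lemma te_inj (t : ETree n m) (hok : TOK G t) (hnd : (verts t).Nodup) :
    ∀ ℓ₁ ∈ te t, ∀ ℓ₂ ∈ te t, ℓ₁.2.1 = ℓ₂.2.1 → ℓ₁ = ℓ₂ := by
  intro ℓ₁ h₁ ℓ₂ h₂ he
  have hmapnd : ((te t).map (fun ℓ => ℓ.2.2)).Nodup := by
    rw [chT]
    exact (List.nodup_cons.1 (verts_cons t ▸ hnd)).2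
  suffices hcc : ℓ₁.2.2 = ℓ₂.2.2 by
    exact List.inj_on_of_nodup_map hmapnd h₁ h₂ hcc
  by_contra hcc
  have E1 := teOKT G t hok ℓ₁ h₁
  have E2 := teOKT G t hok ℓ₂ h₂
  have I1 := idxT t hnd ℓ₁ h₁
  have I2 := idxT t hnd ℓ₂ h₂
  have hp1c1 : ℓ₁.2.2 ≠ ℓ₁.1 := by intro h; rw [h] at I1; omega
  have hp2c2 : ℓ₂.2.2 ≠ ℓ₂.1 := by intro h; rw [h] at I2; omega
  have key1 : ℓ₁.2.2 = ℓ₂.1 := by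
    have hh := (E1 ℓ₁.2.2).symm.trans (he ▸ E2 ℓ₁.2.2)
    by_cases hq : ℓ₁.2.2 = ℓ₂.1
    · exact hq
    · exfalso
      simp only [ind, if_neg hp1c1, if_pos rfl, if_neg hq, if_neg hcc, zero_add, add_zero] at hh
      exact one_ne_zero hh
  have key2 : ℓ₂.2.2 = ℓ₁.1 := by
    have hh := (E1 ℓ₂.2.2).symm.trans (he ▸ E2 ℓ₂.2.2)
    by_cases hq : ℓ₂.2.2 = ℓ₁.1
    · exact hq
    · exfalso
      have hcc' : ℓ₂.2.2 ≠ ℓ₁.2.2 := fun h => hcc h.symm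
      simp only [ind, if_neg hq, if_neg hcc', if_pos rfl, if_neg hp2c2, zero_add, add_zero] at hh
      exact (one_ne_zero hh.symm)
  rw [key1] at I1
  rw [key2] at I2
  omega

-- ## indexing lemmas for pairs
lemma pairs_getElem : ∀ (L : List (Fin n)) (a : Fin n) (i : ℕ) (h : i < L.length)
    (h1 : i < (pairs a L).length) (h2 : i < (a :: L).length),
    (pairs a L)[i] = ind ((a :: L)[i]) + ind (L[i]) := by
  intro L
  induction L with
  | nil => intro a i h _ _; simp at h
  | cons b L ih =>
      intro a i h h1 h2
      cases i with
      | zero => rfl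
      | succ i =>
          have h' : i < L.length := by simpa using h
          have := ih b i h' (by rw [pairs_length]; exact h') (by simp; omega)
          simpa [pairs] using this

lemma pairsAll_length (L : List (Fin n)) : (pairsAll L).length = L.length - 1 := by
  cases L with
  | nil => rfl
  | cons a L => simp [pairsAll, pairs_length]

lemma pairsAll_getElem (L : List (Fin n)) (i : ℕ) (h : i + 1 < L.length)
    (h1 : i < (pairsAll L).length) (h2 : i < L.length) :
    (pairsAll L)[i] = ind (L[i]) + ind (L[i+1]'h) := by
  cases L with
  | nil => simp at h
  | cons a L =>
      have h' : i < L.length := by simpa using h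
      have := pairs_getElem L a i h' (by rw [pairs_length]; exact h') (by simpa using h2)
      simpa [pairsAll] using this

-- ## sums
lemma gsum_apply (s : List (Γ n m)) (v : Fin n) :
    gsum G s v = (s.map (fun ℓ => G ℓ.2.1 v)).sum := by
  induction s with
  | nil => rfl
  | cons a s ih => rw [gsum_cons]; simp only [List.map_cons, List.sum_cons, Pi.add_apply, ih]

lemma sum_count_mul (l : List (Fin m)) (f : Fin m → ZMod 2) :
    ∑ e, (l.count e : ZMod 2) * f e = (l.map f).sum := by
  induction l with
  | nil => simp
  | cons a l ih =>
      have hsplit : ∀ e : Fin m, ((List.count e (a :: l) : ℕ) : ZMod 2) * f e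
          = (l.count e : ZMod 2) * f e + (if e = a then 1 else 0) * f e := by
        intro e
        rw [List.count_cons]
        rcases eq_or_ne e a with he | he
        · subst he; push_cast; simp; ring
        · have hba : (a == e) = false := by simp [(Ne.symm he)]
          simp only [hba, Bool.false_eq_true, if_false, if_neg he]
          push_cast
          ring
      rw [Finset.sum_congr rfl (fun e _ => hsplit e), Finset.sum_add_distrib, ih]
      simp [ite_mul, Finset.sum_ite_eq', add_comm]

lemma list_sum_get {α M : Type*} [AddCommMonoid M] (l : List α) (g : α → M) :
    ∑ i : Fin l.length, g (l.get i) = (l.map g).sum := by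
  rw [← List.ofFn_getElem_eq_map l g, List.sum_ofFn]; rfl
end SkipT

open SkipT
set_option maxHeartbeats 1000000

/-- **SkipTree.** For any connected graph with incidence matrix
`G ∈ F₂^{m×n}`, there exist a `(3,2)`-sparse matrix `T ∈ F₂^{n×m}` and a permutation
matrix `P` with `T·G·P = H_C`. -/
theorem skipTree {n m : ℕ} (G : Matrix (Fin m) (Fin n) (ZMod 2))
    (hinc : IsIncidence G) (hconn : (incGraph G).Connected) :
    ∃ (T : Matrix (Fin n) (Fin m) (ZMod 2)) (P : Matrix (Fin n) (Fin n) (ZMod 2)),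
      Sparse T 3 2 ∧ IsPermMatrix P ∧ T * G * P = HC n := by
  classical
  obtain ⟨v0⟩ := hconn.nonempty
  have hn : 0 < n := v0.pos
  haveI : NeZero n := ⟨by omega⟩
  have ht0ok : TOK G (ETree.node v0 .nil) := trivial
  obtain ⟨t, hok, hnd, hlen⟩ := grow G hinc hconn (n - 1) (ETree.node v0 .nil) ht0ok
    (by show ([v0] : List (Fin n)).Nodup; simp)
    (by show n = ([v0] : List (Fin n)).length + (n - 1); simp; omega)
  obtain ⟨T1, T2, T3, T4, T5, T6, T7, T8, T9⟩ := tD_ok G t hok hnd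
  rcases htD : tD t with ⟨L, SF⟩
  rcases hSF : SF with ⟨S, F⟩
  subst hSF
  simp only [htD] at T1 T2 T3 T4 T5 T6 T7 T8 T9
  have hLn : L.length = n := T1.length_eq.trans hlen
  have hLnd : L.Nodup := T1.nodup_iff.2 hnd
  have hLne : L ≠ [] := by intro h; rw [h] at hLn; simp at hLn; omega
  have hSlen : S.length = n - 1 := by
    have h := congrArg List.length T3
    rw [List.length_map, pairsAll_length] at h
    omega
  set S' : List (List (Γ n m)) := S ++ [F] with hS'def
  have hS'len : S'.length = n := by
    rw [hS'def, List.length_append, hSlen]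
    simp; omega
  set Lf : Fin n → Fin n := fun i => L.get (finCongr hLn.symm i) with hLfdef
  set Sf : Fin n → List (Γ n m) := fun i => S'.get (finCongr hS'len.symm i) with hSfdef
  have hLfinj : Function.Injective Lf :=
    (List.nodup_iff_injective_get.1 hLnd).comp (finCongr hLn.symm).injective
  have hLfbij : Function.Bijective Lf := Finite.injective_iff_bijective.1 hLfinj
  set σ : Equiv.Perm (Fin n) := (Equiv.ofBijective Lf hLfbij).symm with hσdef
  set P : Matrix (Fin n) (Fin n) (ZMod 2) :=
    Matrix.of (fun i j => if σ i = j then 1 else 0) with hPdef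
  set T : Matrix (Fin n) (Fin m) (ZMod 2) :=
    Matrix.of (fun i e => (((Sf i).map (fun ℓ => ℓ.2.1)).count e : ZMod 2)) with hTdef
  have hSfmem : ∀ i : Fin n, Sf i ∈ S' := fun i => List.get_mem _ _
  have hSflen : ∀ i, (Sf i).length ≤ 3 := by
    intro i
    rcases List.mem_append.1 (hSfmem i) with h | h
    · exact T4 _ h
    · rw [List.mem_singleton.1 h]; have := T8; omega
  have hSfsub : ∀ i, ∀ ℓ ∈ Sf i, ℓ ∈ te t := by
    intro i ℓ hℓ
    rcases List.mem_append.1 (hSfmem i) with h | h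
    · exact T5 ℓ (List.mem_flatten_of_mem h hℓ)
    · exact T9 ℓ (by rwa [← List.mem_singleton.1 h])
  have hcnt2 : ∀ ℓ, cnt S' ℓ ≤ 2 := by
    intro ℓ
    rw [hS'def, cnt_append, cnt_cons, cnt_nil]
    have := T6 ℓ; omega
  have hadd1 : ∀ i : Fin n, ((i + 1 : Fin n) : ℕ) = (i.val + 1) % n := by
    intro i
    rw [Fin.add_def, Fin.val_one']
    show (i.val + 1 % n) % n = (i.val + 1) % n
    conv_rhs => rw [Nat.add_mod, Nat.mod_eq_of_lt i.isLt]
  -- the chain computation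
  have hchain : ∀ i : Fin n, gsum G (Sf i) = ind (Lf i) + ind (Lf (i + 1)) := by
    intro i
    have hvi : Lf i = L[i.val]'(by omega) := rfl
    by_cases hc : i.val + 1 < n
    · have hiS : i.val < S.length := by omega
      have h1 : Sf i = S[i.val]'hiS := by
        show S'.get _ = _
        rw [List.get_eq_getElem]
        exact List.getElem_append_left hiS
      have hstep : (i + 1 : Fin n).val = i.val + 1 := by
        rw [hadd1 i, Nat.mod_eq_of_lt hc]
      have hvj : Lf (i + 1) = L[i.val + 1]'(by omega) := by
        show L.get _ = _
        rw [List.get_eq_getElem]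
        simp only [finCongr_apply, Fin.coe_cast, hstep]
      rw [h1, hvi, hvj]
      have hmi : i.val < (S.map (gsum G)).length := by rw [List.length_map]; exact hiS
      have e1 : (S.map (gsum G))[i.val]'hmi = gsum G (S[i.val]'hiS) := List.getElem_map _
      have e2 : (S.map (gsum G))[i.val]'hmi = (pairsAll L)[i.val]'(T3 ▸ hmi) :=
        List.getElem_of_eq T3 hmi
      rw [← e1, e2, pairsAll_getElem L i.val (by omega) _ (by omega)]
    · have hieq : i.val + 1 = n := by have := i.isLt; omega
      have h1 : Sf i = F := by
        show S'.get _ = _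
        rw [List.get_eq_getElem]
        have hge : S.length ≤ (finCongr hS'len.symm i).val := by
          simp only [finCongr_apply, Fin.coe_cast]; omega
        rw [List.getElem_append_right hge]
        simp only [finCongr_apply, Fin.coe_cast, hSlen]
        have : i.val - (n - 1) = 0 := by omega
        simp [this]
      have hwrap : (i + 1 : Fin n).val = 0 := by
        rw [hadd1 i, hieq, Nat.mod_self]
      have hL0 : Lf (i + 1) = root t := by
        show L.get _ = _
        rw [List.get_eq_getElem]
        have h0 : (0 : ℕ) < L.length := by omega
        have := T2
        rw [List.head?_eq_head hLne] at this
        have hh : L.head hLne = root t := Option.some.inj this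
        simp only [finCongr_apply, Fin.coe_cast, hwrap]
        rw [List.getElem_zero h0]
        exact hh
      have hLlast : L.getLastD (root t) = L[i.val]'(by omega) := by
        rw [List.getLastD_eq_getLast?, List.getLast?_eq_getLast hLne]
        show L.getLast hLne = _
        rw [List.getLast_eq_getElem]
        congr 1
        omega
      rw [h1, T7, hLlast, hL0, hvi]
      exact add_comm _ _
  -- row of T*G
  have hTG : ∀ i v, (T * G) i v = gsum G (Sf i) v := by
    intro i v
    rw [Matrix.mul_apply]
    have h1 : ∑ e, T i e * G e v
        = ∑ e, (((Sf i).map (fun ℓ => ℓ.2.1)).count e : ZMod 2) * G e v := rfl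
    rw [h1, sum_count_mul, List.map_map, gsum_apply]
    rfl
  refine ⟨T, P, ⟨?_, ?_⟩, ⟨σ, fun i j => rfl⟩, ?_⟩
  · -- row sparsity
    intro i
    have hsub : Finset.univ.filter (fun e => T i e ≠ 0)
        ⊆ ((Sf i).map (fun ℓ => ℓ.2.1)).toFinset := by
      intro e he
      simp only [Finset.mem_filter, Finset.mem_univ, true_and] at he
      rw [List.mem_toFinset]
      by_contra hc
      apply he
      show (((Sf i).map (fun ℓ => ℓ.2.1)).count e : ZMod 2) = 0
      rw [List.count_eq_zero_of_not_mem hc]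
      rfl
    calc hwt (T i) ≤ ((Sf i).map (fun ℓ => ℓ.2.1)).toFinset.card := Finset.card_le_card hsub
      _ ≤ ((Sf i).map (fun ℓ => ℓ.2.1)).length := List.toFinset_card_le _
      _ = (Sf i).length := List.length_map _
      _ ≤ 3 := hSflen i
  · -- column sparsity
    intro e
    by_cases hex : ∃ ℓ₀ ∈ te t, ℓ₀.2.1 = e
    · obtain ⟨ℓ₀, hℓ₀, hℓ₀e⟩ := hex
      have key : ∀ i : Fin n, T i e ≠ 0 → ℓ₀ ∈ Sf i := by
        intro i hne
        have hmem : e ∈ (Sf i).map (fun ℓ => ℓ.2.1) := by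
          by_contra hc
          apply hne
          show (((Sf i).map (fun ℓ => ℓ.2.1)).count e : ZMod 2) = 0
          rw [List.count_eq_zero_of_not_mem hc]
          rfl
        obtain ⟨ℓ, hℓmem, hℓe⟩ := List.mem_map.1 hmem
        have heq : ℓ = ℓ₀ :=
          te_inj G t hok hnd ℓ (hSfsub i ℓ hℓmem) ℓ₀ hℓ₀ (by rw [hℓe, hℓ₀e])
        exact heq ▸ hℓmem
      have hsum : ∑ i : Fin n, (Sf i).count ℓ₀ = cnt S' ℓ₀ := by
        have h1 : ∑ i : Fin n, (Sf i).count ℓ₀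
            = ∑ j : Fin S'.length, (S'.get j).count ℓ₀ := by
          apply Fintype.sum_equiv (finCongr hS'len.symm)
          intro i; rfl
        rw [h1, list_sum_get]
        rfl
      calc hwt (fun i => T i e)
          = (Finset.univ.filter (fun i => T i e ≠ 0)).card := rfl
        _ ≤ ∑ i ∈ Finset.univ.filter (fun i => T i e ≠ 0), (Sf i).count ℓ₀ := by
            rw [Finset.card_eq_sum_ones]
            apply Finset.sum_le_sum
            intro i hi
            simp only [Finset.mem_filter, Finset.mem_univ, true_and] at hi
            exact List.count_pos_iff.2 (key i hi)
        _ ≤ ∑ i : Fin n, (Sf i).count ℓ₀ :=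
            Finset.sum_le_sum_of_subset (Finset.filter_subset _ _)
        _ = cnt S' ℓ₀ := hsum
        _ ≤ 2 := hcnt2 ℓ₀
    · -- no tree edge has this index: column is zero
      have hz : ∀ i : Fin n, T i e = 0 := by
        intro i
        show (((Sf i).map (fun ℓ => ℓ.2.1)).count e : ZMod 2) = 0
        have : e ∉ (Sf i).map (fun ℓ => ℓ.2.1) := by
          intro hc
          obtain ⟨ℓ, hℓmem, hℓe⟩ := List.mem_map.1 hc
          exact hex ⟨ℓ, hSfsub i ℓ hℓmem, hℓe⟩
        rw [List.count_eq_zero_of_not_mem this]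
        rfl
      have : Finset.univ.filter (fun i => T i e ≠ 0) = ∅ := by
        apply Finset.filter_eq_empty_iff.2
        intro i _
        simp [hz i]
      show (Finset.univ.filter (fun i => T i e ≠ 0)).card ≤ 2
      rw [this]
      simp
  · -- the matrix identity
    ext i j
    rw [Matrix.mul_apply]
    have hPv : ∀ v, P v j = if v = Lf j then 1 else 0 := by
      intro v
      show (if σ v = j then 1 else 0) = _
      by_cases hv : v = Lf j
      · rw [if_pos hv, if_pos]
        rw [hv]
        show σ ((Equiv.ofBijective Lf hLfbij) j) = j
        rw [hσdef]
        simp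
      · rw [if_neg hv, if_neg]
        intro hc
        apply hv
        have : σ.symm (σ v) = σ.symm j := by rw [hc]
        rw [Equiv.symm_apply_apply] at this
        rw [this]
        rfl
    rw [Finset.sum_congr rfl (fun v _ => by rw [hPv v])]
    simp only [mul_ite, mul_one, mul_zero, Finset.sum_ite_eq', Finset.mem_univ, if_true]
    rw [hTG i (Lf j), hchain i]
    show ind (Lf i) (Lf j) + ind (Lf (i + 1)) (Lf j) = HC n i j
    have hHC : HC n i j = (if i = j then 1 else 0)
        + (if (j : ℕ) = ((i : ℕ) + 1) % n then 1 else 0) := by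
      rw [HC, Matrix.add_apply, Matrix.one_apply, Matrix.of_apply]
    rw [hHC]
    congr 1
    · show (if Lf j = Lf i then 1 else 0) = if i = j then (1 : ZMod 2) else 0
      by_cases h : i = j
      · rw [if_pos h, if_pos (by rw [h])]
      · rw [if_neg h, if_neg (fun hc => h (hLfinj hc).symm)]
    · show (if Lf j = Lf (i + 1) then 1 else 0) = if (j : ℕ) = ((i : ℕ) + 1) % n then (1 : ZMod 2) else 0
      by_cases h : (j : ℕ) = ((i : ℕ) + 1) % n
      · rw [if_pos h, if_pos]
        congr 1
        apply Fin.ext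
        rw [hadd1 i]
        exact h
      · rw [if_neg h, if_neg]
        intro hc
        apply h
        have := hLfinj hc
        rw [this, hadd1 i]
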